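/- The crown graph H₄ = K_{4,4} minus a perfect matching satisfies fp(H₄) = 2, and moreover the chromatic number of its host-induced 2K₂ conflict graph equals 2, so the conflict-graph lower bound is tight for H₄. -/

import Mathlib

open SimpleGraph

/-- A graph contains an induced `2K₂`: four vertices carrying exactly two disjoint edges. -/
def Has2K2 {V : Type*} (G : SimpleGraph V) : Prop :=
  ∃ a b c d : V, G.Adj a b ∧ G.Adj c d ∧
    a ≠ c ∧ a ≠ d ∧ b ≠ c ∧ b ≠ d ∧
    ¬ G.Adj a c ∧ ¬ G.Adj a d ∧ ¬ G.Adj b c ∧ ¬ G.Adj b d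

/-- `f` assigns each edge of `G` one of `k` parts, and each part induces
an induced-`2K₂`-free (Ferrers) graph. -/
def IsFerrersPartition {V : Type*} (G : SimpleGraph V) (k : ℕ)
    (f : G.edgeSet → Fin k) : Prop :=
  ∀ i : Fin k,
    ¬ Has2K2 (SimpleGraph.fromEdgeSet {e | ∃ h : e ∈ G.edgeSet, f ⟨e, h⟩ = i})

/-- The Ferrers partition number. -/
noncomputable def fp {V : Type*} (G : SimpleGraph V) : ℕ :=
  sInf {k | ∃ f : G.edgeSet → Fin k, IsFerrersPartition G k f}

/-- `M` is an induced matching of `G`. -/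
def IsInducedMatching {V : Type*} (G : SimpleGraph V) (M : Set (Sym2 V)) : Prop :=
  M ⊆ G.edgeSet ∧
  ∀ e ∈ M, ∀ f ∈ M, e ≠ f → ∀ u ∈ e, ∀ v ∈ f, u ≠ v ∧ ¬ G.Adj u v

/-- The induced matching number. -/
noncomputable def nuInd {V : Type*} (G : SimpleGraph V) : ℕ :=
  sSup {n | ∃ M : Finset (Sym2 V), IsInducedMatching G ↑M ∧ M.card = n}

/-- The crown graph `H_n`: `K_{n,n}` minus a perfect matching, with
`u_i ~ v_j` iff `i ≠ j`. -/
def crown (n : ℕ) : SimpleGraph (Fin n ⊕ Fin n) :=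
  SimpleGraph.fromRel (fun x y =>
    ∃ i j : Fin n, i ≠ j ∧ x = Sum.inl i ∧ y = Sum.inr j)

/-- The host-induced `2K₂` conflict graph on the edge set of a bipartite graph `G`:
two edges are adjacent iff they are vertex-disjoint and both cross pairs are
non-edges of the host. -/
def Chost {α β : Type*} (G : SimpleGraph (α ⊕ β)) : SimpleGraph G.edgeSet :=
  SimpleGraph.fromRel (fun e f =>
    ∃ u v u' v', (e : Sym2 (α ⊕ β)) = s(Sum.inl u, Sum.inr v) ∧
      (f : Sym2 (α ⊕ β)) = s(Sum.inl u', Sum.inr v') ∧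
      u ≠ u' ∧ v ≠ v' ∧
      ¬ G.Adj (Sum.inl u) (Sum.inr v') ∧ ¬ G.Adj (Sum.inl u') (Sum.inr v))

/- ### Auxiliary machinery -/

instance crownAdjDecidable : DecidableRel (crown 4).Adj := fun _ _ => instDecidableAnd

/-- "Upper-triangular" edges of the crown. -/
def upperE (e : Sym2 (Fin 4 ⊕ Fin 4)) : Prop :=
  ∃ i j : Fin 4, i < j ∧ e = s(Sum.inl i, Sum.inr j)

instance : DecidablePred upperE := fun _ => Fintype.decidableExistsFintype

/-- The 2-coloring of the crown's edges: upper vs lower triangular. -/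
def col (e : (crown 4).edgeSet) : Fin 2 := if upperE e.1 then 0 else 1

instance colPartAdjDecidable (i : Fin 2) :
    DecidableRel (SimpleGraph.fromEdgeSet
      {e | ∃ h : e ∈ (crown 4).edgeSet, col ⟨e, h⟩ = i}).Adj := by
  intro v w
  have : Decidable ((∃ h : s(v, w) ∈ (crown 4).edgeSet, col ⟨s(v, w), h⟩ = i) ∧ v ≠ w) := by
    unfold col
    exact instDecidableAnd
  exact this

instance has2K2Decidable {V : Type*} [Fintype V] [DecidableEq V] (G : SimpleGraph V)
    [DecidableRel G.Adj] : Decidable (Has2K2 G) := by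
  unfold Has2K2; infer_instance

instance chostAdjDecidable : DecidableRel (Chost (crown 4)).Adj := fun _ _ => instDecidableAnd

lemma col_ferrers : IsFerrersPartition (crown 4) 2 col := by
  intro i
  revert i
  decide

lemma crown4_has2K2 : Has2K2 (crown 4) := by decide

lemma edge01 : s(Sum.inl 0, Sum.inr 1) ∈ (crown 4).edgeSet := by decide

lemma col_valid : ∀ a b : (crown 4).edgeSet, (Chost (crown 4)).Adj a b → col a ≠ col b := by
  decide

lemma chost_adj01 :
    (Chost (crown 4)).Adj ⟨s(Sum.inl 0, Sum.inr 1), by decide⟩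
      ⟨s(Sum.inl 1, Sum.inr 0), by decide⟩ := by decide

/-- For the crown graph `H₄ = K_{4,4}` minus a perfect matching, `fp (H₄) = 2` and
the chromatic number of its host-induced `2K₂` conflict graph equals `2`,
so the conflict-graph lower bound is tight. -/
theorem stmt18 :
    fp (crown 4) = 2 ∧ (Chost (crown 4)).chromaticNumber = 2 := by
  constructor
  · -- fp (crown 4) = 2
    have h2 : (2 : ℕ) ∈ {k | ∃ f : (crown 4).edgeSet → Fin k, IsFerrersPartition (crown 4) k f} :=
      ⟨col, col_ferrers⟩
    refine le_antisymm (Nat.sInf_le h2) (le_csInf ⟨2, h2⟩ ?_)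
    rintro k ⟨f, hf⟩
    by_contra hlt
    push_neg at hlt
    interval_cases k
    · exact (f ⟨s(Sum.inl 0, Sum.inr 1), edge01⟩).elim0
    · apply hf 0
      have hset : {e | ∃ h : e ∈ (crown 4).edgeSet, f ⟨e, h⟩ = 0} = (crown 4).edgeSet :=
        Set.ext fun e => ⟨fun ⟨h, _⟩ => h, fun h => ⟨h, Subsingleton.elim _ _⟩⟩
      rw [hset, SimpleGraph.fromEdgeSet_edgeSet]
      exact crown4_has2K2
  · -- chromatic number of Chost = 2
    have hcol : (Chost (crown 4)).Colorable 2 :=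
      ⟨SimpleGraph.Coloring.mk col fun {a b} hab => col_valid a b hab⟩
    have hle : (Chost (crown 4)).chromaticNumber ≤ 2 := by
      have := hcol.chromaticNumber_le
      exact_mod_cast this
    refine le_antisymm hle ?_
    have hn1 : ¬ (Chost (crown 4)).Colorable 1 := by
      rintro ⟨C⟩
      have := C.valid chost_adj01
      exact this (Subsingleton.elim _ _)
    have hgt : (1 : ℕ∞) < (Chost (crown 4)).chromaticNumber := by
      by_contra h
      push_neg at h
      rw [show (1 : ℕ∞) = ((1 : ℕ) : ℕ∞) from rfl,
        SimpleGraph.chromaticNumber_le_iff_colorable] at h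
      exact hn1 h
    have := Order.add_one_le_of_lt hgt
    rw [one_add_one_eq_two] at this
    exact this
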